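/- The set L = {(i, j, k) ∈ ZMod α × ZMod β × ZMod γ : k equals the reduction modulo γ of (i.val + j.val), where i.val and j.val denote the natural-number representatives of i and j} has cardinality α·β, and no two distinct elements of L agree in exactly two coordinates. -/
import Mathlib


/-- Two triples agree in exactly two of their three coordinates. -/
def agreeTwo {α β γ : ℕ} (a b : ZMod α × ZMod β × ZMod γ) : Prop :=
  (a.1 = b.1 ∧ a.2.1 = b.2.1 ∧ a.2.2 ≠ b.2.2) ∨
  (a.1 = b.1 ∧ a.2.1 ≠ b.2.1 ∧ a.2.2 = b.2.2) ∨
  (a.1 ≠ b.1 ∧ a.2.1 = b.2.1 ∧ a.2.2 = b.2.2)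

theorem stmt_15 (α β γ : ℕ) (hα : α.Prime) (hβ : β.Prime) (hγ : γ.Prime)
    (hαβ : α < β) (hβγ : β < γ) :
    ({t : ZMod α × ZMod β × ZMod γ |
        t.2.2 = ((t.1.val + t.2.1.val : ℕ) : ZMod γ)}).ncard = α * β ∧
      ∀ a ∈ {t : ZMod α × ZMod β × ZMod γ |
          t.2.2 = ((t.1.val + t.2.1.val : ℕ) : ZMod γ)},
        ∀ b ∈ {t : ZMod α × ZMod β × ZMod γ |
          t.2.2 = ((t.1.val + t.2.1.val : ℕ) : ZMod γ)},
        a ≠ b → ¬ agreeTwo a b := by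
  haveI : NeZero α := ⟨hα.pos.ne'⟩
  haveI : NeZero β := ⟨hβ.pos.ne'⟩
  haveI : NeZero γ := ⟨hγ.pos.ne'⟩
  have hαγ : α < γ := hαβ.trans hβγ
  -- key: equal third coords with one equal first/second coord forces equality
  have key2 : ∀ (j j' : ZMod β), ((j.val : ZMod γ) = (j'.val : ZMod γ)) → j = j' := by
    intro j j' h
    have := (ZMod.natCast_eq_natCast_iff' _ _ _).mp h
    rw [Nat.mod_eq_of_lt (j.val_lt.trans hβγ), Nat.mod_eq_of_lt (j'.val_lt.trans hβγ)] at this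
    exact ZMod.val_injective β this
  have key1 : ∀ (i i' : ZMod α), ((i.val : ZMod γ) = (i'.val : ZMod γ)) → i = i' := by
    intro i i' h
    have := (ZMod.natCast_eq_natCast_iff' _ _ _).mp h
    rw [Nat.mod_eq_of_lt (i.val_lt.trans hαγ), Nat.mod_eq_of_lt (i'.val_lt.trans hαγ)] at this
    exact ZMod.val_injective α this
  constructor
  · have himg : {t : ZMod α × ZMod β × ZMod γ |
        t.2.2 = ((t.1.val + t.2.1.val : ℕ) : ZMod γ)} =
        (fun p : ZMod α × ZMod β => (p.1, p.2, ((p.1.val + p.2.val : ℕ) : ZMod γ))) ''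
          Set.univ := by
      ext ⟨i, j, k⟩
      simp only [Set.mem_setOf_eq, Set.image_univ, Set.mem_range, Prod.mk.injEq, Prod.exists]
      constructor
      · rintro rfl; exact ⟨i, j, rfl, rfl, rfl⟩
      · rintro ⟨a, b, rfl, rfl, rfl⟩; rfl
    rw [himg, Set.ncard_image_of_injective _ (by
        rintro ⟨a, b⟩ ⟨c, d⟩ h
        simp only [Prod.mk.injEq] at h
        exact Prod.ext h.1 h.2.1)]
    simp [Set.ncard_univ, Nat.card_prod, Nat.card_eq_fintype_card, ZMod.card]
  · rintro ⟨i, j, k⟩ ha ⟨i', j', k'⟩ hb hne h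
    simp only [Set.mem_setOf_eq] at ha hb
    rcases h with ⟨h1, h2, h3⟩ | ⟨h1, h2, h3⟩ | ⟨h1, h2, h3⟩
    · dsimp at h1 h2 h3; subst h1; subst h2; exact h3 (ha.trans hb.symm)
    · dsimp at h1 h2 h3; subst h1; subst h3
      apply h2
      rw [ha, Nat.cast_add, Nat.cast_add] at hb
      exact key2 _ _ (add_left_cancel hb)
    · dsimp at h1 h2 h3; subst h2; subst h3
      apply h1
      rw [ha, Nat.cast_add, Nat.cast_add] at hb
      exact key1 _ _ (add_right_cancel hb)
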